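/- Let J ⊆ I ⊊ R be ideals of a Noetherian commutative ring R such that the image of I in R/J contains a regular element of R/J. If p ∈ Ass_R(R/J) is an associated prime of R/J, then the extended–contracted prime p̃ = ⊕_{t≥0} (p ∩ I^t) u^t ⊆ Rees_R(I) is an associated prime of the Aluffi algebra 𝒜_{R↠R/J}(I/J) viewed as a module over Rees_R(I). -/

import Mathlib

set_option synthInstance.maxHeartbeats 1000000
set_option maxHeartbeats 2000000

open Polynomial

variable {R : Type*} [CommRing R]

/-- The defining ideal `(J, J̃)·Rees_R(I)` of the Aluffi algebra inside the Rees algebra. -/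
noncomputable def aluffiIdeal (I J : Ideal R) : Ideal (reesAlgebra I) :=
  Ideal.span {x : reesAlgebra I | ∃ a ∈ J, (x : R[X]) = C a ∨ (x : R[X]) = C a * X}

/-- The (R-embedded) Aluffi algebra of `I/J`, presented as `Rees_R(I)/(J, J̃)Rees_R(I)`. -/
noncomputable abbrev AluffiAlgebra (I J : Ideal R) :=
  reesAlgebra I ⧸ aluffiIdeal I J

/-- The extended–contracted ideal `𝔭̃ = 𝔭R[u] ∩ Rees_R(I) = ⊕_{t≥0} (𝔭 ∩ I^t)u^t` of an
ideal `𝔭 ⊆ R` inside the Rees algebra of `I`. -/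
noncomputable def tildeIdeal (I p : Ideal R) : Ideal (reesAlgebra I) :=
  Ideal.comap ((reesAlgebra I).val.toRingHom) (p.map (Polynomial.C : R →+* R[X]))

/-- degree-`s` piece of the Aluffi ideal -/
def Jpow (I J : Ideal R) : ℕ → Ideal R
  | 0 => J
  | (s+1) => J * I ^ s

lemma coeff_mem_of_mem_aluffiIdeal {I J : Ideal R} {g : reesAlgebra I}
    (hg : g ∈ aluffiIdeal I J) (s : ℕ) : (g : R[X]).coeff s ∈ J := by
  have hle : aluffiIdeal I J ≤
      Ideal.comap ((reesAlgebra I).val.toRingHom) (J.map (C : R →+* R[X])) := by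
    rw [aluffiIdeal, Ideal.span_le]
    rintro z ⟨a, ha, (hz | hz)⟩ <;>
      · simp only [SetLike.mem_coe, Ideal.mem_comap]
        show (z : R[X]) ∈ _
        rw [hz, Ideal.mem_map_C_iff]
        intro n
        simp only [coeff_C, coeff_C_mul, coeff_X]
        split_ifs <;> simp [ha]
  have := hle hg
  rw [Ideal.mem_comap] at this
  exact Ideal.mem_map_C_iff.mp this s

lemma monomial_mem_aluffiIdeal {I J : Ideal R} (hJI : J ≤ I) (s : ℕ) (a : R)
    (ha : a ∈ Jpow I J s) (hmem : (monomial s a : R[X]) ∈ reesAlgebra I) :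
    (⟨monomial s a, hmem⟩ : reesAlgebra I) ∈ aluffiIdeal I J := by
  cases s with
  | zero =>
    exact Ideal.subset_span ⟨a, ha, Or.inl (by simp)⟩
  | succ s =>
    obtain ⟨h, hh⟩ : ∃ (h : (monomial (s+1) a : R[X]) ∈ reesAlgebra I),
        (⟨monomial (s+1) a, h⟩ : reesAlgebra I) ∈ aluffiIdeal I J := by
      refine Submodule.mul_induction_on ha ?_ ?_
      · intro j hj t ht
        have h1 : (C j * X : R[X]) ∈ reesAlgebra I := by
          rw [← pow_one X, C_mul_X_pow_eq_monomial]
          exact reesAlgebra.monomial_mem.mpr (by simpa using hJI hj)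
        have h2 : (monomial s t : R[X]) ∈ reesAlgebra I := reesAlgebra.monomial_mem.mpr ht
        have heq : (monomial (s+1) (j*t) : R[X]) = (C j * X) * monomial s t := by
          rw [← pow_one X, C_mul_X_pow_eq_monomial, monomial_mul_monomial, add_comm]
        refine ⟨by rw [heq]; exact Subalgebra.mul_mem _ h1 h2, ?_⟩
        have : (⟨monomial (s+1) (j*t), by rw [heq]; exact Subalgebra.mul_mem _ h1 h2⟩ :
            reesAlgebra I) = ⟨C j * X, h1⟩ * ⟨monomial s t, h2⟩ := Subtype.ext heq
        rw [this]
        exact Ideal.mul_mem_right _ _ (Ideal.subset_span ⟨j, hj, Or.inr rfl⟩)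
      · rintro u v ⟨hu, hum⟩ ⟨hv, hvm⟩
        refine ⟨by rw [map_add]; exact Subalgebra.add_mem _ hu hv, ?_⟩
        have : (⟨monomial (s+1) (u+v), by rw [map_add]; exact Subalgebra.add_mem _ hu hv⟩ :
            reesAlgebra I) = ⟨monomial (s+1) u, hu⟩ + ⟨monomial (s+1) v, hv⟩ :=
          Subtype.ext (by simp [map_add])
        rw [this]
        exact Ideal.add_mem _ hum hvm
    exact hh

lemma mem_aluffiIdeal_of_coeff {I J : Ideal R} (hJI : J ≤ I) (g : reesAlgebra I)
    (h : ∀ s, (g : R[X]).coeff s ∈ Jpow I J s) : g ∈ aluffiIdeal I J := by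
  have hg : g = ∑ s ∈ Finset.range ((g : R[X]).natDegree + 1),
      (⟨monomial s ((g : R[X]).coeff s), reesAlgebra.monomial_mem.mpr (g.2 s)⟩ :
        reesAlgebra I) := by
    apply Subtype.ext
    push_cast
    exact (g : R[X]).as_sum_range' _ (Nat.lt_succ_self _)
  rw [hg]
  exact Ideal.sum_mem _ fun s _ => monomial_mem_aluffiIdeal hJI s _ (h s) _

/-- let `J ⊆ I ⊊ R` be ideals of a Noetherian ring such that `I/J`
contains a regular element of `R/J`.  If `p` is an associated prime of `R/J` then
`p̃ = ⊕_{t≥0}(p ∩ I^t)u^t` is an associated prime of the Aluffi algebra, viewed as a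
module over `Rees_R(I)`. -/
theorem aluffi_associated_primes [IsNoetherianRing R]
    (I J : Ideal R) (hJI : J ≤ I) (hI : I ≠ ⊤)
    (hreg : ∃ b ∈ I, Ideal.Quotient.mk J b ∈ nonZeroDivisors (R ⧸ J)) :
    ∀ p ∈ associatedPrimes R (R ⧸ J),
      IsAssociatedPrime (tildeIdeal I p) (AluffiAlgebra I J) := by
  rintro p hp'
  obtain ⟨hp, x0, hx0⟩ := isAssociatedPrime_iff.mp hp'
  obtain ⟨b, hbI, hbreg⟩ := hreg
  obtain ⟨x, rfl⟩ := Ideal.Quotient.mk_surjective x0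
  -- membership in p
  have hpmem : ∀ r : R, r ∈ p ↔ r * x ∈ J := by
    intro r
    rw [hx0, Submodule.mem_colon_singleton, Submodule.mem_bot]
    have : r • (Ideal.Quotient.mk J x) = Ideal.Quotient.mk J (r * x) := by
      rw [Algebra.smul_def, Ideal.Quotient.algebraMap_eq, ← map_mul]
    rw [this, Ideal.Quotient.eq_zero_iff_mem]
  -- Artin--Rees
  obtain ⟨k, hk⟩ := Ideal.exists_pow_inf_eq_pow_smul (R := R) (M := R) I (J : Submodule R R)
  -- key containment
  have key : ∀ s (r : R), r ∈ J → r ∈ I ^ s → r * b ^ k ∈ Jpow I J s := by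
    intro s r hrJ hrI
    cases s with
    | zero => exact Ideal.mul_mem_right _ _ hrJ
    | succ s =>
      show r * b ^ k ∈ J * I ^ s
      rcases le_or_gt (s + 1) k with hsk | hks
      · exact Ideal.mul_mem_mul hrJ
          (Ideal.pow_le_pow_right (Nat.le_of_succ_le hsk) (Ideal.pow_mem_pow hbI k))
      · have hk' := hk (s + 1) (le_of_lt hks)
        have hr' : r ∈ I ^ (s + 1 - k) • ((I ^ k • (⊤ : Submodule R R)) ⊓ (J : Submodule R R)) := by
          rw [← hk']
          refine ⟨?_, hrJ⟩
          rw [Ideal.smul_eq_mul, Ideal.mul_top]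
          exact hrI
        have hr'' : r ∈ I ^ (s + 1 - k) * J := by
          refine Submodule.smul_le.mpr ?_ hr'
          intro c hc y hy
          rw [smul_eq_mul]
          exact Ideal.mul_mem_mul hc hy.2
        have : r * b ^ k ∈ (I ^ (s + 1 - k) * J) * I ^ k :=
          Ideal.mul_mem_mul hr'' (Ideal.pow_mem_pow hbI k)
        have hle : (I ^ (s + 1 - k) * J) * I ^ k ≤ J * I ^ s := by
          rw [mul_comm (I ^ (s + 1 - k)) J, mul_assoc, ← pow_add]
          have : s + 1 - k + k = s + 1 := Nat.sub_add_cancel (le_of_lt hks)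
          rw [this]
          exact Ideal.mul_mono_right (Ideal.pow_le_pow_right (Nat.le_succ s))
        exact hle this
  -- the witness element
  have hy : (C (x * b ^ k) : R[X]) ∈ reesAlgebra I := by
    rw [← Polynomial.algebraMap_eq]
    exact Subalgebra.algebraMap_mem _ _
  set y : reesAlgebra I := ⟨C (x * b ^ k), hy⟩ with hy_def
  refine ⟨?_, Ideal.Quotient.mk (aluffiIdeal I J) y, ?_⟩
  · haveI := Ideal.isPrime_map_C_of_isPrime (P := p)
    exact Ideal.IsPrime.comap _
  · suffices hc : tildeIdeal I p = (⊥ : Submodule (reesAlgebra I) (AluffiAlgebra I J)).colon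
        {Ideal.Quotient.mk (aluffiIdeal I J) y} by
      haveI := Ideal.isPrime_map_C_of_isPrime (P := p)
      haveI hpr : (tildeIdeal I p).IsPrime := Ideal.IsPrime.comap _
      rw [← hc, hpr.radical]
    ext f
    have hsmul : f • (Ideal.Quotient.mk (aluffiIdeal I J) y) =
        Ideal.Quotient.mk (aluffiIdeal I J) (f * y) := by
      rfl
    rw [Submodule.mem_colon_singleton, Submodule.mem_bot, hsmul, Ideal.Quotient.eq_zero_iff_mem]
    have hcoeff : ∀ s, ((f * y : reesAlgebra I) : R[X]).coeff s
        = ((f : R[X]).coeff s * x) * b ^ k := by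
      intro s
      push_cast
      rw [coeff_mul_C, mul_assoc]
    constructor
    · intro hf
      have hfc : ∀ s, (f : R[X]).coeff s ∈ p := by
        intro s
        have : (f : R[X]) ∈ p.map (C : R →+* R[X]) := hf
        exact Ideal.mem_map_C_iff.mp this s
      refine mem_aluffiIdeal_of_coeff hJI _ ?_
      intro s
      rw [hcoeff s]
      exact key s _ ((hpmem _).mp (hfc s)) (Ideal.mul_mem_right _ _ (f.2 s))
    · intro hf
      show (f : R[X]) ∈ p.map (C : R →+* R[X])
      rw [Ideal.mem_map_C_iff]
      intro s
      have h1 : ((f : R[X]).coeff s * x) * b ^ k ∈ J := by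
        rw [← hcoeff s]
        exact coeff_mem_of_mem_aluffiIdeal hf s
      rw [hpmem]
      have h2 : Ideal.Quotient.mk J ((f : R[X]).coeff s * x) * (Ideal.Quotient.mk J b) ^ k = 0 := by
        rw [← map_pow, ← map_mul, Ideal.Quotient.eq_zero_iff_mem]
        exact h1
      have h3 := (pow_mem hbreg k).2 _ h2
      rwa [Ideal.Quotient.eq_zero_iff_mem] at h3
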